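/- Let x, y > 0 with x + y < 1, and set c = x + y and β = (2 − c)/c. Then (1−x)^{β(1−x)} (1−y)^{β(1−y)} / (x^x y^y) ≥ (1−c)^{β(1−c)} / c^c. Equivalently, with α = (r+1)/2 where c = (r−1)/r: ((x+y)^{x+y}/(x^x y^y))^{α−1} ≥ ((1−x−y)^{1−x−y}/((1−x)^{1−x}(1−y)^{1−y}))^{α}. -/

import Mathlib

open Real Set

noncomputable def keyF (c u : ℝ) : ℝ :=
  c*(c*Real.log c - u*Real.log u - (c-u)*Real.log (c-u))
    - (2-c)*((1-c)*Real.log (1-c) - (1-u)*Real.log (1-u) - (1-c+u)*Real.log (1-c+u))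

noncomputable def keyF' (c u : ℝ) : ℝ :=
  c*(Real.log (c-u) - Real.log u) + (2-c)*(Real.log (1-c+u) - Real.log (1-u))

noncomputable def keyF'' (c u : ℝ) : ℝ :=
  c*(-(1/(c-u)) - 1/u) + (2-c)*(1/(1-c+u) + 1/(1-u))

lemma keyF_hasDeriv (c : ℝ) (hc1 : c < 1) {u : ℝ} (hu : u ∈ Set.Ioo (0:ℝ) c) :
    HasDerivAt (keyF c) (keyF' c u) u := by
  obtain ⟨hu0, huc⟩ := hu
  have hq : (0:ℝ) < c - u := by linarith
  have hr : (0:ℝ) < 1 - u := by linarith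
  have hs : (0:ℝ) < 1 - c + u := by linarith
  have h1 : HasDerivAt (fun v : ℝ => v * Real.log v) (Real.log u + 1) u :=
    Real.hasDerivAt_mul_log hu0.ne'
  have h2 : HasDerivAt (fun v : ℝ => (c - v) * Real.log (c - v)) ((Real.log (c-u) + 1) * (-1)) u := by
    exact (Real.hasDerivAt_mul_log hq.ne').comp u ((hasDerivAt_id u).const_sub c)
  have h3 : HasDerivAt (fun v : ℝ => (1 - v) * Real.log (1 - v)) ((Real.log (1-u) + 1) * (-1)) u := by
    exact (Real.hasDerivAt_mul_log hr.ne').comp u ((hasDerivAt_id u).const_sub 1)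
  have h4 : HasDerivAt (fun v : ℝ => (1 - c + v) * Real.log (1 - c + v)) ((Real.log (1-c+u) + 1) * 1) u := by
    exact (Real.hasDerivAt_mul_log hs.ne').comp u ((hasDerivAt_id u).const_add (1-c))
  have H := ((((hasDerivAt_const u (c*Real.log c)).sub h1).sub h2).const_mul c).sub
    (((((hasDerivAt_const u ((1-c)*Real.log (1-c))).sub h3).sub h4)).const_mul (2-c))
  apply H.congr_deriv
  simp only [keyF']; ring

lemma keyF'_hasDeriv (c : ℝ) (hc1 : c < 1) {u : ℝ} (hu : u ∈ Set.Ioo (0:ℝ) c) :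
    HasDerivAt (keyF' c) (keyF'' c u) u := by
  obtain ⟨hu0, huc⟩ := hu
  have hq : (0:ℝ) < c - u := by linarith
  have hr : (0:ℝ) < 1 - u := by linarith
  have hs : (0:ℝ) < 1 - c + u := by linarith
  have h1 : HasDerivAt Real.log (1/u) u := by
    simpa using Real.hasDerivAt_log hu0.ne'
  have h2 : HasDerivAt (fun v : ℝ => Real.log (c - v)) ((1/(c-u)) * (-1)) u := by
    exact (by simpa using Real.hasDerivAt_log hq.ne' :
      HasDerivAt Real.log (1/(c-u)) (c-u)).comp u ((hasDerivAt_id u).const_sub c)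
  have h3 : HasDerivAt (fun v : ℝ => Real.log (1 - v)) ((1/(1-u)) * (-1)) u := by
    exact (by simpa using Real.hasDerivAt_log hr.ne' :
      HasDerivAt Real.log (1/(1-u)) (1-u)).comp u ((hasDerivAt_id u).const_sub 1)
  have h4 : HasDerivAt (fun v : ℝ => Real.log (1 - c + v)) ((1/(1-c+u)) * 1) u := by
    exact (by simpa using Real.hasDerivAt_log hs.ne' :
      HasDerivAt Real.log (1/(1-c+u)) (1-c+u)).comp u ((hasDerivAt_id u).const_add (1-c))
  have H := ((h2.sub h1).const_mul c).add ((h4.sub h3).const_mul (2-c))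
  apply H.congr_deriv
  simp only [keyF'']; ring

lemma keyF_nonneg (c : ℝ) (hc : 0 < c) (hc1 : c < 1) (u : ℝ) (hu : u ∈ Set.Icc (0:ℝ) c) :
    0 ≤ keyF c u := by
  have hcont : Continuous (keyF c) := by
    have hml := Real.continuous_mul_log
    have c2 : Continuous fun u : ℝ => (c - u) * Real.log (c - u) :=
      hml.comp (continuous_const.sub continuous_id)
    have c3 : Continuous fun u : ℝ => (1 - u) * Real.log (1 - u) :=
      hml.comp (continuous_const.sub continuous_id)
    have c4 : Continuous fun u : ℝ => (1 - c + u) * Real.log (1 - c + u) :=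
      hml.comp (continuous_const.add continuous_id)
    exact (continuous_const.mul ((continuous_const.sub hml).sub c2)).sub
      (continuous_const.mul ((continuous_const.sub c3).sub c4))
  have hconc : ConcaveOn ℝ (Set.Icc (0:ℝ) c) (keyF c) := by
    apply concaveOn_of_hasDerivWithinAt2_nonpos (f' := keyF' c) (f'' := keyF'' c)
      (convex_Icc 0 c) hcont.continuousOn
    · intro v hv
      rw [interior_Icc] at hv
      exact (keyF_hasDeriv c hc1 hv).hasDerivWithinAt
    · intro v hv
      rw [interior_Icc] at hv
      exact (keyF'_hasDeriv c hc1 hv).hasDerivWithinAt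
    · intro v hv
      rw [interior_Icc] at hv
      obtain ⟨hv0, hvc⟩ := hv
      have hq : (0:ℝ) < c - v := by linarith
      have hr : (0:ℝ) < 1 - v := by linarith
      have hs : (0:ℝ) < 1 - c + v := by linarith
      have e : keyF'' c v = ((2-c)^2 * (v*(c-v)) - c^2*((1-v)*(1-c+v)))
          / (v*(c-v)*(1-v)*(1-c+v)) := by
        simp only [keyF'']
        field_simp
        ring
      rw [e]
      apply div_nonpos_of_nonpos_of_nonneg
      · nlinarith [mul_nonneg (sub_pos.2 hc1).le (sq_nonneg (c - 2*v))]
      · positivity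
  obtain ⟨hu0, huc⟩ := hu
  have h0 : keyF c 0 = 0 := by simp [keyF]
  have hcc : keyF c c = 0 := by simp [keyF]
  have ha : (0:ℝ) ≤ (c-u)/c := div_nonneg (by linarith) hc.le
  have hb : (0:ℝ) ≤ u/c := div_nonneg hu0 hc.le
  have hab : (c-u)/c + u/c = 1 := by field_simp; ring
  have key := hconc.2 (Set.left_mem_Icc.2 hc.le) (Set.right_mem_Icc.2 hc.le) ha hb hab
  simp only [smul_eq_mul, mul_zero, h0, hcc, zero_add, add_zero] at key
  rwa [div_mul_cancel₀ _ hc.ne'] at key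

lemma star_ineq (x y : ℝ) (hx : 0 < x) (hy : 0 < y) (hxy : x + y < 1) :
    (2 - (x+y)) * ((1-(x+y))*Real.log (1-(x+y)) - (1-x)*Real.log (1-x) - (1-y)*Real.log (1-y))
      ≤ (x+y) * ((x+y)*Real.log (x+y) - x*Real.log x - y*Real.log y) := by
  have h := keyF_nonneg (x+y) (by linarith) hxy x ⟨hx.le, by linarith⟩
  simp only [keyF] at h
  have e1 : x + y - x = y := by ring
  have e2 : 1 - (x+y) + x = 1 - y := by ring
  rw [e1, e2] at h
  linarith

/-- For `x, y > 0` with `x + y < 1`, setting `c = x + y` and `β = (2-c)/c`,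
one has `(1-x)^(β(1-x)) (1-y)^(β(1-y)) / (x^x y^y) ≥ (1-c)^(β(1-c)) / c^c`;
equivalently, with `α = (r+1)/2 = (2-c)/(2(1-c))` where `c = (r-1)/r`,
`((x+y)^(x+y)/(x^x y^y))^(α-1) ≥ ((1-x-y)^(1-x-y)/((1-x)^(1-x)(1-y)^(1-y)))^α`. -/
theorem key_inequality (x y : ℝ) (hx : 0 < x) (hy : 0 < y) (hxy : x + y < 1) :
    ((1 - x) ^ ((2 - (x + y)) / (x + y) * (1 - x)) *
        (1 - y) ^ ((2 - (x + y)) / (x + y) * (1 - y))) / (x ^ x * y ^ y) ≥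
      (1 - (x + y)) ^ ((2 - (x + y)) / (x + y) * (1 - (x + y))) / (x + y) ^ (x + y) ∧
    ((x + y) ^ (x + y) / (x ^ x * y ^ y)) ^ ((2 - (x + y)) / (2 * (1 - (x + y))) - 1) ≥
      ((1 - x - y) ^ (1 - x - y) / ((1 - x) ^ (1 - x) * (1 - y) ^ (1 - y))) ^
        ((2 - (x + y)) / (2 * (1 - (x + y)))) := by
  have hc : (0:ℝ) < x + y := by linarith
  have hx1 : (0:ℝ) < 1 - x := by linarith
  have hy1 : (0:ℝ) < 1 - y := by linarith
  have hc1 : (0:ℝ) < 1 - (x + y) := by linarith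
  have hstar := star_ineq x y hx hy hxy
  constructor
  · rw [ge_iff_le]
    have hL : (0:ℝ) < ((1 - x) ^ ((2 - (x + y)) / (x + y) * (1 - x)) *
        (1 - y) ^ ((2 - (x + y)) / (x + y) * (1 - y))) / (x ^ x * y ^ y) := by positivity
    have hR : (0:ℝ) < (1 - (x + y)) ^ ((2 - (x + y)) / (x + y) * (1 - (x + y))) /
        (x + y) ^ (x + y) := by positivity
    rw [← Real.exp_log hR, ← Real.exp_log hL, Real.exp_le_exp,
      Real.log_div (by positivity) (by positivity),
      Real.log_div (by positivity) (by positivity),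
      Real.log_mul (by positivity) (by positivity),
      Real.log_mul (by positivity) (by positivity),
      Real.log_rpow hx1, Real.log_rpow hy1, Real.log_rpow hc1, Real.log_rpow hc,
      Real.log_rpow hx, Real.log_rpow hy]
    have hdiv : (2 - (x+y)) / (x+y) *
        ((1-(x+y))*Real.log (1-(x+y)) - (1-x)*Real.log (1-x) - (1-y)*Real.log (1-y))
        ≤ (x+y)*Real.log (x+y) - x*Real.log x - y*Real.log y := by
      rw [div_mul_eq_mul_div, div_le_iff₀ hc]
      nlinarith [hstar]
    nlinarith [hdiv]
  · rw [ge_iff_le]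
    have hP : (0:ℝ) < (x + y) ^ (x + y) / (x ^ x * y ^ y) := by positivity
    have hQ : (0:ℝ) < (1 - x - y) ^ (1 - x - y) / ((1 - x) ^ (1 - x) * (1 - y) ^ (1 - y)) := by
      have : (0:ℝ) < 1 - x - y := by linarith
      positivity
    have hxy' : (0:ℝ) < 1 - x - y := by linarith
    rw [← Real.exp_log (Real.rpow_pos_of_pos hQ _), ← Real.exp_log (Real.rpow_pos_of_pos hP _),
      Real.exp_le_exp, Real.log_rpow hP, Real.log_rpow hQ,
      Real.log_div (by positivity) (by positivity),
      Real.log_div (by positivity) (by positivity),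
      Real.log_mul (by positivity) (by positivity),
      Real.log_rpow hx1, Real.log_rpow hy1, Real.log_rpow hc, Real.log_rpow hxy',
      Real.log_mul (by positivity) (by positivity), Real.log_rpow hx, Real.log_rpow hy]
    have e3 : (1:ℝ) - x - y = 1 - (x + y) := by ring
    rw [e3]
    have e1 : (2 - (x+y)) / (2*(1-(x+y))) - 1 = (x+y) / (2*(1-(x+y))) := by
      field_simp
      ring
    rw [e1]
    rw [div_mul_eq_mul_div, div_mul_eq_mul_div, div_le_div_iff₀ (by positivity) (by positivity)]
    nlinarith [hstar, hc1]
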